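/- Let α > 0 and let X be a nonnegative real random variable on a probability space with probability measure P. Assume that -log E[e^{-λX}] / ((log λ)²/(2α)) tends to 1 as λ → +∞. Then -log P(X ≤ x) / ((log x)²/(2α)) tends to 1 as x → 0⁺. -/

import Mathlib

open MeasureTheory Filter Real
set_option maxHeartbeats 1000000

theorem stmt_8 {Ω : Type*} [MeasurableSpace Ω] (P : Measure Ω) [IsProbabilityMeasure P]
    (α : ℝ) (hα : 0 < α) (X : Ω → ℝ) (hX : Measurable X) (hX0 : ∀ ω, 0 ≤ X ω)
    (h : Filter.Tendsto
      (fun lam : ℝ =>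
        -Real.log (∫ ω, Real.exp (-lam * X ω) ∂P) / ((Real.log lam) ^ 2 / (2 * α)))
      Filter.atTop (nhds 1)) :
    Filter.Tendsto
      (fun x : ℝ =>
        -Real.log ((P {ω | X ω ≤ x}).toReal) / ((Real.log x) ^ 2 / (2 * α)))
      (nhdsWithin 0 (Set.Ioi 0)) (nhds 1) := by
  set l : Filter ℝ := nhdsWithin 0 (Set.Ioi 0) with hl
  set L : ℝ → ℝ := fun lam => ∫ ω, Real.exp (-lam * X ω) ∂P with hLdef
  set F : ℝ → ℝ := fun lam => -Real.log (L lam) with hFdef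
  set G : ℝ → ℝ := fun lam => F lam / ((Real.log lam) ^ 2 / (2 * α)) with hGdef
  have hG : Tendsto G atTop (nhds 1) := h
  -- basic integrability
  have hmeas : ∀ lam : ℝ, Measurable fun ω => Real.exp (-lam * X ω) := fun lam =>
    ((hX.const_mul (-lam)).exp)
  have hInt : ∀ lam : ℝ, 0 ≤ lam → Integrable (fun ω => Real.exp (-lam * X ω)) P := by
    intro lam hlam
    refine (integrable_const (1 : ℝ)).mono' (hmeas lam).aestronglyMeasurable ?_
    filter_upwards with ω
    rw [Real.norm_eq_abs, abs_of_pos (Real.exp_pos _)]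
    exact Real.exp_le_one_iff.2 (by nlinarith [hX0 ω])
  have hLpos : ∀ lam : ℝ, 0 ≤ lam → 0 < L lam := fun lam hlam =>
    integral_exp_pos (hInt lam hlam)
  -- Markov bound : Px * exp(-lam*x) ≤ L lam
  have hs : ∀ x : ℝ, MeasurableSet {ω | X ω ≤ x} := fun x =>
    hX measurableSet_Iic
  have hMarkov : ∀ x : ℝ, ∀ lam : ℝ, 0 < x → 0 ≤ lam →
      (P {ω | X ω ≤ x}).toReal * Real.exp (-lam * x) ≤ L lam := by
    intro x lam hx hlam
    have h1 : (P {ω | X ω ≤ x}).toReal * Real.exp (-lam * x)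
        = ∫ _ω in {ω | X ω ≤ x}, Real.exp (-lam * x) ∂P := by
      rw [setIntegral_const]; simp [smul_eq_mul, measureReal_def]
    rw [h1]
    refine le_trans (setIntegral_mono_on (integrableOn_const (measure_ne_top P _))
      ((hInt lam hlam).integrableOn) (hs x) ?_) ?_
    · intro ω hω
      exact Real.exp_le_exp.2 (by nlinarith [Set.mem_setOf.1 hω])
    · exact setIntegral_le_integral (hInt lam hlam)
        (Filter.Eventually.of_forall fun ω => (Real.exp_pos _).le)
  -- split bound : L lam ≤ Px + exp(-lam*x)
  have hSplit : ∀ x : ℝ, ∀ lam : ℝ, 0 < x → 0 ≤ lam →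
      L lam ≤ (P {ω | X ω ≤ x}).toReal + Real.exp (-lam * x) := by
    intro x lam hx hlam
    have hdecomp := integral_add_compl (hs x) (hInt lam hlam)
    have h1 : ∫ ω in {ω | X ω ≤ x}, Real.exp (-lam * X ω) ∂P
        ≤ (P {ω | X ω ≤ x}).toReal := by
      have := setIntegral_mono_on ((hInt lam hlam).integrableOn)
        (integrableOn_const (measure_ne_top P _)) (hs x)
        (fun ω _ => Real.exp_le_one_iff.2 (by nlinarith [hX0 ω]) :
          ∀ ω ∈ {ω | X ω ≤ x}, Real.exp (-lam * X ω) ≤ (1:ℝ))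
      simpa [setIntegral_const, measureReal_def] using this
    have h2 : ∫ ω in {ω | X ω ≤ x}ᶜ, Real.exp (-lam * X ω) ∂P
        ≤ Real.exp (-lam * x) := by
      have hmono := setIntegral_mono_on ((hInt lam hlam).integrableOn)
        (integrableOn_const (measure_ne_top P _)) (hs x).compl
        (fun ω hω => Real.exp_le_exp.2 (by
          have : ¬ X ω ≤ x := hω
          nlinarith [lt_of_not_ge this]) :
          ∀ ω ∈ {ω | X ω ≤ x}ᶜ, Real.exp (-lam * X ω) ≤ Real.exp (-lam * x))
      rw [setIntegral_const, smul_eq_mul, measureReal_def] at hmono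
      refine hmono.trans ?_
      have hle1 : (P ({ω | X ω ≤ x}ᶜ)).toReal ≤ 1 := by
        have h0 : (P ({ω | X ω ≤ x}ᶜ)) ≤ 1 := prob_le_one
        have h' := ENNReal.toReal_mono (by norm_num) h0
        simpa using h'
      nlinarith [Real.exp_pos (-lam * x)]
    calc L lam = _ + _ := hdecomp.symm
      _ ≤ _ := add_le_add h1 h2
  -- filters
  have hy : Tendsto (fun x : ℝ => -Real.log x) l atTop :=
    tendsto_neg_atBot_atTop.comp Real.tendsto_log_nhdsGT_zero
  have hinv : Tendsto (fun x : ℝ => x⁻¹) l atTop := tendsto_inv_nhdsGT_zero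
  set lamf : ℝ → ℝ := fun x => (-Real.log x) ^ 3 / x with hlamf
  have hlam : Tendsto lamf l atTop := by
    have h1 : Tendsto (fun x : ℝ => (-Real.log x) ^ 3) l atTop :=
      (tendsto_pow_atTop (n := 3) (by norm_num)).comp hy
    have := h1.atTop_mul_atTop₀ hinv
    refine this.congr fun x => by simp only [hlamf, div_eq_mul_inv]
  -- eventual basic facts
  have ev_x : ∀ᶠ x : ℝ in l, 0 < x := by
    filter_upwards [self_mem_nhdsWithin] with x hx
    exact hx
  have ev_y : ∀ᶠ x : ℝ in l, 1 < -Real.log x := hy.eventually (eventually_gt_atTop 1)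
  -- log of lamf
  have ev_loglam : ∀ᶠ x : ℝ in l,
      Real.log (lamf x) = -Real.log x + 3 * Real.log (-Real.log x) := by
    filter_upwards [ev_x, ev_y] with x hx hyx
    simp only [hlamf]
    have hy0 : (0:ℝ) < -Real.log x := by linarith
    rw [Real.log_div (by positivity) (ne_of_gt hx), Real.log_pow]
    push_cast
    ring
  -- (log lam)^2 / y^2 → 1
  have hlogdiv : Tendsto (fun y : ℝ => Real.log y / y) atTop (nhds 0) :=
    Real.isLittleO_log_id_atTop.tendsto_div_nhds_zero
  have hq : Tendsto (fun x : ℝ => (Real.log (lamf x)) ^ 2 / (-Real.log x) ^ 2) l (nhds 1) := by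
    have hbase : Tendsto (fun x : ℝ => Real.log (lamf x) / (-Real.log x)) l (nhds 1) := by
      have h1 : Tendsto (fun x : ℝ => 1 + 3 * (Real.log (-Real.log x) / (-Real.log x))) l
          (nhds 1) := by
        have := (hlogdiv.comp hy).const_mul 3
        have := (tendsto_const_nhds (x := (1:ℝ)) (f := l)).add this
        simpa using this
      refine Tendsto.congr' ?_ h1
      filter_upwards [ev_x, ev_y, ev_loglam] with x hx hyx hll
      have hx0 : Real.log x ≠ 0 := by intro h0; rw [h0] at hyx; norm_num at hyx
      have hy0 : -Real.log x ≠ 0 := neg_ne_zero.2 hx0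
      rw [hll]
      field_simp
      ring
    have := hbase.mul hbase
    simp only [one_mul] at this
    refine Tendsto.congr' ?_ this
    filter_upwards [ev_y] with x hyx
    rw [div_mul_div_comm]; ring_nf
  -- eventual positivity of P {X ≤ x} with lower bound L(lamf x)/2
  have ev_lam0 : ∀ᶠ x : ℝ in l, 0 ≤ lamf x := hlam.eventually (eventually_ge_atTop 0)
  have ev_F : ∀ᶠ x : ℝ in l, F (lamf x) ≤ (Real.log (lamf x)) ^ 2 / α := by
    have hGev : ∀ᶠ lam : ℝ in atTop, G lam ≤ 2 := hG.eventually (eventually_le_nhds (by norm_num))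
    have hd : ∀ᶠ lam : ℝ in atTop, 1 < Real.log lam :=
      Real.tendsto_log_atTop.eventually (eventually_gt_atTop 1)
    filter_upwards [hlam.eventually (hGev.and hd)] with x hx
    obtain ⟨h2, hd⟩ := hx
    simp only [hGdef] at h2
    have hll0 : Real.log (lamf x) ≠ 0 := by intro h0; rw [h0] at hd; norm_num at hd
    have hden : 0 < (Real.log (lamf x)) ^ 2 / (2 * α) := by positivity
    have h3 := (div_le_iff₀ hden).1 h2
    calc F (lamf x) ≤ 2 * ((Real.log (lamf x)) ^ 2 / (2 * α)) := h3
      _ = (Real.log (lamf x)) ^ 2 / α := by field_simp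
  have ev_q2 : ∀ᶠ x : ℝ in l, (Real.log (lamf x)) ^ 2 ≤ 2 * (-Real.log x) ^ 2 := by
    have := hq.eventually (eventually_le_nhds (show (1:ℝ) < 2 by norm_num))
    filter_upwards [this, ev_y] with x hx hyx
    have hy2 : (0:ℝ) < (-Real.log x) ^ 2 := by positivity
    calc (Real.log (lamf x)) ^ 2
        = ((Real.log (lamf x)) ^ 2 / (-Real.log x) ^ 2) * (-Real.log x) ^ 2 :=
          (div_mul_cancel₀ _ (ne_of_gt hy2)).symm
      _ ≤ 2 * (-Real.log x) ^ 2 := by nlinarith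
  have ev_ybig : ∀ᶠ x : ℝ in l, 2 / α + 1 ≤ -Real.log x :=
    hy.eventually (eventually_ge_atTop _)
  -- key: exp(-lamf x * x) ≤ L (lamf x) / 2, so Px ≥ L/2
  have ev_half : ∀ᶠ x : ℝ in l,
      Real.exp (-(lamf x) * x) ≤ L (lamf x) / 2 := by
    filter_upwards [ev_x, ev_y, ev_F, ev_q2, ev_ybig, ev_lam0] with x hx hyx hF hq2 hyb hlam0
    set y := -Real.log x with hydef
    have hlx : lamf x * x = y ^ 3 := by
      rw [hlamf]; field_simp; rw [hydef]; ring
    have hL : 0 < L (lamf x) := hLpos _ hlam0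
    have hFy : F (lamf x) ≤ 2 * y ^ 2 / α := by
      calc F (lamf x) ≤ (Real.log (lamf x)) ^ 2 / α := hF
        _ ≤ 2 * y ^ 2 / α := div_le_div_of_nonneg_right hq2 hα.le
    have hcube : 2 * y ^ 2 / α + Real.log 2 ≤ y ^ 3 := by
      have hlog2 : Real.log 2 ≤ 1 := by
        have := Real.log_le_sub_one_of_pos (show (0:ℝ) < 2 by norm_num)
        linarith
      have hy1 : 1 ≤ y := le_of_lt hyx
      have h2a : 2 / α ≤ y - 1 := by linarith
      have hyy : 1 ≤ y ^ 2 := by nlinarith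
      have key : (2 / α) * y ^ 2 ≤ (y - 1) * y ^ 2 :=
        mul_le_mul_of_nonneg_right h2a (sq_nonneg y)
      calc 2 * y ^ 2 / α + Real.log 2 = (2 / α) * y ^ 2 + Real.log 2 := by ring
        _ ≤ (y - 1) * y ^ 2 + 1 := add_le_add key hlog2
        _ ≤ y ^ 3 := by nlinarith
    -- exp(-y^3) ≤ L/2 ⟺ -y^3 ≤ log(L/2) = log L - log 2 = -(F + log 2)
    have hlogL : Real.log (L (lamf x) / 2) = -(F (lamf x) + Real.log 2) := by
      rw [Real.log_div (ne_of_gt hL) (by norm_num), hFdef]; ring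
    have : -(lamf x * x) ≤ Real.log (L (lamf x) / 2) := by
      have hsum : F (lamf x) + Real.log 2 ≤ y ^ 3 :=
        le_trans (add_le_add hFy le_rfl) hcube
      rw [hlogL, hlx]
      exact neg_le_neg hsum
    calc Real.exp (-(lamf x) * x) = Real.exp (-(lamf x * x)) := by ring_nf
      _ ≤ Real.exp (Real.log (L (lamf x) / 2)) := Real.exp_le_exp.2 this
      _ = L (lamf x) / 2 := Real.exp_log (by positivity)
  have ev_Ppos : ∀ᶠ x : ℝ in l,
      L (lamf x) / 2 ≤ (P {ω | X ω ≤ x}).toReal := by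
    filter_upwards [ev_x, ev_half, ev_lam0] with x hx hhalf hlam0
    have := hSplit x (lamf x) hx hlam0
    linarith
  -- upper bound for f
  set D : ℝ → ℝ := fun x => (Real.log x) ^ 2 / (2 * α) with hD
  have ev_D : ∀ᶠ x : ℝ in l, 0 < D x := by
    filter_upwards [ev_y] with x hyx
    have : Real.log x ≠ 0 := by intro h0; rw [h0] at hyx; norm_num at hyx
    rw [hD]; positivity
  have ev_hi : ∀ᶠ x : ℝ in l,
      -Real.log ((P {ω | X ω ≤ x}).toReal) / D x
        ≤ (F (lamf x) + Real.log 2) / D x := by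
    filter_upwards [ev_Ppos, ev_lam0, ev_D] with x hP hlam0 hDx
    have hL : 0 < L (lamf x) := hLpos _ hlam0
    have hlog : Real.log (L (lamf x) / 2) ≤ Real.log ((P {ω | X ω ≤ x}).toReal) :=
      Real.log_le_log (by positivity) hP
    have hnum : -Real.log ((P {ω | X ω ≤ x}).toReal) ≤ F (lamf x) + Real.log 2 := by
      rw [Real.log_div (ne_of_gt hL) (by norm_num)] at hlog
      rw [hFdef]; simp only; linarith
    exact div_le_div_of_nonneg_right hnum hDx.le
  -- lower bound for f
  have ev_lo : ∀ᶠ x : ℝ in l,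
      (F x⁻¹ - 1) / D x ≤ -Real.log ((P {ω | X ω ≤ x}).toReal) / D x := by
    filter_upwards [ev_x, ev_Ppos, ev_lam0, ev_D] with x hx hP hlam0 hDx
    have hL : 0 < L (lamf x) := hLpos _ hlam0
    have hPpos : 0 < (P {ω | X ω ≤ x}).toReal := lt_of_lt_of_le (by positivity) hP
    have hinv0 : (0:ℝ) ≤ x⁻¹ := by positivity
    have hM := hMarkov x x⁻¹ hx hinv0
    have hxx : -x⁻¹ * x = -1 := by field_simp
    rw [hxx] at hM
    have hLi : 0 < L x⁻¹ := hLpos _ hinv0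
    have hlog : Real.log ((P {ω | X ω ≤ x}).toReal * Real.exp (-1)) ≤ Real.log (L x⁻¹) :=
      Real.log_le_log (by positivity) hM
    rw [Real.log_mul (ne_of_gt hPpos) (ne_of_gt (Real.exp_pos _)), Real.log_exp] at hlog
    have hnum : F x⁻¹ - 1 ≤ -Real.log ((P {ω | X ω ≤ x}).toReal) := by
      rw [hFdef]; simp only; linarith
    exact div_le_div_of_nonneg_right hnum hDx.le
  -- limits of the two bounds
  have hDlog : ∀ᶠ x : ℝ in l, D x = (-Real.log x) ^ 2 / (2 * α) := by
    filter_upwards with x; rw [hD]; ring_nf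
  have htendD : Tendsto (fun x : ℝ => 1 / D x) l (nhds 0) := by
    have h1 : Tendsto D l atTop := by
      have := (tendsto_pow_atTop (n := 2) (by norm_num)).comp hy
      have h2 := this.atTop_div_const (by positivity : (0:ℝ) < 2 * α)
      refine h2.congr' ?_
      filter_upwards [hDlog] with x hx
      simp only [Function.comp]
      rw [hx]
    exact h1.inv_tendsto_atTop.congr fun x => (one_div _).symm
  have hlo_lim : Tendsto (fun x : ℝ => (F x⁻¹ - 1) / D x) l (nhds 1) := by
    have h1 : Tendsto (fun x : ℝ => G x⁻¹) l (nhds 1) := hG.comp hinv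
    have h2 : Tendsto (fun x : ℝ => G x⁻¹ - 1 / D x) l (nhds 1) := by
      have := h1.sub htendD; simpa using this
    refine Tendsto.congr' ?_ h2
    filter_upwards [ev_x, ev_D] with x hx hDx
    have hlogi : (Real.log x⁻¹) ^ 2 = (Real.log x) ^ 2 := by
      rw [Real.log_inv]; ring
    rw [hGdef]; simp only
    rw [hlogi]
    rw [sub_div]
  have hhi_lim : Tendsto (fun x : ℝ => (F (lamf x) + Real.log 2) / D x) l (nhds 1) := by
    have h1 : Tendsto (fun x : ℝ => G (lamf x)) l (nhds 1) := hG.comp hlam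
    have h2 : Tendsto (fun x : ℝ =>
        G (lamf x) * ((Real.log (lamf x)) ^ 2 / (-Real.log x) ^ 2)
          + Real.log 2 * (1 / D x)) l (nhds 1) := by
      have := (h1.mul hq).add (htendD.const_mul (Real.log 2))
      simpa using this
    refine Tendsto.congr' ?_ h2
    filter_upwards [ev_x, ev_y, ev_D, hDlog,
      hlam.eventually (Real.tendsto_log_atTop.eventually (eventually_gt_atTop 1))] with
      x hx hyx hDx hDl hll
    have hy0 : (-Real.log x) ≠ 0 := by linarith
    have hll0 : Real.log (lamf x) ≠ 0 := by linarith
    rw [hGdef]; simp only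
    rw [hDl]
    field_simp
  -- conclude with squeeze
  refine tendsto_of_tendsto_of_tendsto_of_le_of_le' hlo_lim hhi_lim ev_lo ev_hi
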